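/- Let A be a Noetherian commutative ring and 𝒫 a prime ideal. The sequence of lengths ℓ_{A_𝒫}(A_𝒫 / 𝒫ⁿ A_𝒫), n ≥ 1, is bounded if and only if 𝒫 is a minimal prime ideal of A. -/

import Mathlib

open scoped Classical

universe u

/-- The ordinal-valued (Krull) length of a module: the rank of `⊥` in the well-founded
relation `>` on submodules; defined to be `0` when the relation is not accessible at `⊥`. -/
noncomputable def olength (A : Type u) [CommRing A] (M : Type u) [AddCommGroup M]
    [Module A M] : Ordinal :=
  if h : Acc (α := Submodule A M) (· > ·) ⊥ then h.rank else 0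

section RankLemmas

variable {α : Type u} [Preorder α]

/-- If every `<`-chain starting at `x` has length at most `n`, then the rank of `x`
under `>` is at most `n`. -/
lemma acc_rank_le_of_chains :
    ∀ (n : ℕ) (x : α) (h : Acc (α := α) (· > ·) x),
      (∀ p : LTSeries α, p.head = x → p.length ≤ n) → h.rank ≤ (n : Ordinal)
  | n, x, h, hb => by
    rw [h.rank_eq]
    apply Ordinal.iSup_le
    rintro ⟨b, hbx⟩
    have hbx' : x < b := hbx
    cases n with
    | zero =>
      exfalso
      have h1 := hb ((RelSeries.singleton _ b).cons x hbx') rfl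
      simp [RelSeries.cons_length, RelSeries.cons, RelSeries.append] at h1
    | succ n =>
      have hq : ∀ q : LTSeries α, q.head = b → q.length ≤ n := by
        intro q hq
        have h1 := hb (q.cons x (hq ▸ hbx')) rfl
        simp only [RelSeries.cons_length] at h1
        omega
      have hrec := acc_rank_le_of_chains n b (h.inv hbx) hq
      show Order.succ ((h.inv hbx).rank) ≤ ((n + 1 : ℕ) : Ordinal)
      rw [Nat.cast_succ, Ordinal.add_one_eq_succ]
      exact Order.succ_le_succ hrec

/-- Along a strictly descending chain the rank under `>` grows. -/
lemma nat_le_rank_of_descending [IsWellFounded α (· > ·)] (g : ℕ → α) :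
    ∀ n : ℕ, (∀ i, i < n → g (i + 1) < g i) →
      (n : Ordinal) ≤ IsWellFounded.rank (α := α) (· > ·) (g n)
  | 0, _ => by simp
  | (n+1), hg => by
    have ih := nat_le_rank_of_descending g n (fun i hi => hg i (by omega))
    have hlt : IsWellFounded.rank (α := α) (· > ·) (g n) <
        IsWellFounded.rank (α := α) (· > ·) (g (n + 1)) :=
      IsWellFounded.rank_lt_of_rel (hg n (by omega))
    have : (n : Ordinal) + 1 ≤ IsWellFounded.rank (α := α) (· > ·) (g (n + 1)) := by
      rw [Ordinal.add_one_eq_succ]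
      exact Order.succ_le_of_lt (lt_of_le_of_lt ih hlt)
    simpa [Nat.cast_succ] using this

end RankLemmas

lemma olength_eq_rank (A : Type u) [CommRing A] (M : Type u) [AddCommGroup M]
    [Module A M] [IsNoetherian A M] :
    olength A M = IsWellFounded.rank (α := Submodule A M) (· > ·) ⊥ := by
  have h : Acc (α := Submodule A M) (· > ·) ⊥ := IsWellFounded.apply _ ⊥
  rw [olength, dif_pos h]
  exact congrArg Acc.rank (Subsingleton.elim _ _)

section HeightLemmas

open Order

/-- Subadditivity of height along a pair of maps which jointly detect strict inequalities. -/
lemma height_le_height_add_height {γ δ ε : Type*} [Preorder γ] [Preorder δ] [Preorder ε]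
    (f : γ → δ) (g : γ → ε) (hf : Monotone f) (hg : Monotone g)
    (hs : ∀ a b : γ, a < b → f a < f b ∨ g a < g b) (x : γ) :
    height x ≤ height (f x) + height (g x) := by
  suffices H : ∀ (n : ℕ) (p : LTSeries γ), p.length = n →
      (p.length : ℕ∞) ≤ height (f p.last) + height (g p.last) by
    exact Order.height_le fun p hp => hp ▸ H p.length p rfl
  intro n
  induction n with
  | zero => intro p hl; simp [hl]
  | succ n ih =>
    intro p hl
    have hne : p.length ≠ 0 := by omega
    have hrel : p.eraseLast.last < p.last := p.eraseLast_last_rel_last hne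
    have hlen : p.eraseLast.length = n := by
      simp only [RelSeries.eraseLast_length]; omega
    have h1 := ih p.eraseLast hlen
    set a := p.eraseLast.last with ha
    have hstep : (p.length : ℕ∞) = (p.eraseLast.length : ℕ∞) + 1 := by
      rw [hlen, hl]; push_cast; ring
    rcases hs a p.last hrel with hlt | hlt
    · by_cases htop : height (f p.last) = ⊤
      · rw [htop, top_add]; exact le_top
      · have h2 : height (f a) + 1 ≤ height (f p.last) :=
          Order.add_one_le_of_lt (height_strictMono hlt
            ((height_mono (hf hrel.le)).trans_lt (lt_top_iff_ne_top.mpr htop)))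
        calc (p.length : ℕ∞) = (p.eraseLast.length : ℕ∞) + 1 := hstep
          _ ≤ (height (f a) + height (g a)) + 1 := by exact add_le_add_left h1 1
          _ = (height (f a) + 1) + height (g a) := by ring
          _ ≤ height (f p.last) + height (g p.last) :=
            add_le_add h2 (height_mono (hg hrel.le))
    · by_cases htop : height (g p.last) = ⊤
      · rw [htop, add_top]; exact le_top
      · have h2 : height (g a) + 1 ≤ height (g p.last) :=
          Order.add_one_le_of_lt (height_strictMono hlt
            ((height_mono (hg hrel.le)).trans_lt (lt_top_iff_ne_top.mpr htop)))
        calc (p.length : ℕ∞) = (p.eraseLast.length : ℕ∞) + 1 := hstep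
          _ ≤ (height (f a) + height (g a)) + 1 := by exact add_le_add_left h1 1
          _ = height (f a) + (height (g a) + 1) := by ring
          _ ≤ height (f p.last) + height (g p.last) :=
            add_le_add (height_mono (hf hrel.le)) h2

variable {R : Type u} [CommRing R]

lemma height_top_submodule_le {M : Type u} [AddCommGroup M] [Module R M] (N : Submodule R M) :
    height (⊤ : Submodule R M) ≤
      height (⊤ : Submodule R N) + height (⊤ : Submodule R (M ⧸ N)) := by
  have hs : ∀ a b : Submodule R M, a < b →
      Submodule.comap N.subtype a < Submodule.comap N.subtype b ∨
      Submodule.map N.mkQ a < Submodule.map N.mkQ b := by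
    intro a b hab
    by_contra hcon
    push_neg at hcon
    obtain ⟨h1, h2⟩ := hcon
    have e1 : Submodule.comap N.subtype a = Submodule.comap N.subtype b :=
      ((Submodule.comap_mono hab.le).lt_or_eq).resolve_left h1
    have e2 : Submodule.map N.mkQ a = Submodule.map N.mkQ b :=
      ((Submodule.map_mono hab.le).lt_or_eq).resolve_left h2
    have i1 : N ⊓ a = N ⊓ b := by
      rw [← Submodule.map_comap_subtype, e1, Submodule.map_comap_subtype]
    have s1 : N ⊔ a = N ⊔ b := by
      rw [← Submodule.comap_map_mkQ, e2, Submodule.comap_map_mkQ]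
    refine hab.ne (eq_of_le_of_inf_le_of_sup_le (z := N) hab.le ?_ ?_)
    · rw [inf_comm b N, ← i1, inf_comm N a]
    · rw [sup_comm b N, ← s1, sup_comm N a]
  have h0 := height_le_height_add_height (fun x => Submodule.comap N.subtype x)
    (fun x => Submodule.map N.mkQ x)
    (fun _ _ h => Submodule.comap_mono h) (fun _ _ h => Submodule.map_mono h) hs ⊤
  simpa [Submodule.comap_top, Submodule.map_top, Submodule.range_mkQ] using h0

lemma height_top_quotient_le {M : Type u} [AddCommGroup M] [Module R M] (N : Submodule R M) :
    height (⊤ : Submodule R (M ⧸ N)) ≤ height (⊤ : Submodule R M) := by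
  have hsm : StrictMono (fun x : Submodule R (M ⧸ N) => Submodule.comap N.mkQ x) := by
    intro a b h
    refine lt_of_le_of_ne (Submodule.comap_mono h.le) (fun e => h.ne ?_)
    exact Submodule.comap_injective_of_surjective N.mkQ_surjective e
  calc height (⊤ : Submodule R (M ⧸ N)) ≤ height (Submodule.comap N.mkQ ⊤) :=
        height_le_height_apply_of_strictMono _ hsm ⊤
    _ ≤ height (⊤ : Submodule R M) := height_mono le_top

lemma height_top_congr {M M' : Type u} [AddCommGroup M] [Module R M]
    [AddCommGroup M'] [Module R M'] (e : M ≃ₗ[R] M') :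
    height (⊤ : Submodule R M) = height (⊤ : Submodule R M') := by
  have h := Order.height_orderIso (Submodule.orderIsoMapComap e) ⊤
  have htop : Submodule.orderIsoMapComap e ⊤ = ⊤ := by
    apply (Submodule.orderIsoMapComap e).map_top
  rw [htop] at h
  exact h.symm

/-- A finitely generated module annihilated by a maximal ideal has finite submodule-lattice
height (it is a finite-dimensional vector space over the residue field). -/
lemma height_top_ne_top_of_torsion (I : Ideal R) [I.IsMaximal] (W : Type u)
    [AddCommGroup W] [Module R W] [Module.Finite R W]
    (hT : Module.IsTorsionBySet R W I) :
    height (⊤ : Submodule R W) ≠ ⊤ := by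
  letI : Field (R ⧸ I) := Ideal.Quotient.field I
  letI : Module (R ⧸ I) W := hT.module
  haveI : IsScalarTower R (R ⧸ I) W := hT.isScalarTower
  haveI : Module.Finite (R ⧸ I) W := Module.Finite.of_restrictScalars_finite R (R ⧸ I) W
  -- promote R-submodules to (R ⧸ I)-submodules
  let prom : Submodule R W → Submodule (R ⧸ I) W := fun U =>
    { carrier := U
      add_mem' := fun ha hb => U.add_mem ha hb
      zero_mem' := U.zero_mem
      smul_mem' := by
        intro c x hx
        obtain ⟨c, rfl⟩ := Ideal.Quotient.mk_surjective c
        have : (Ideal.Quotient.mk I c) • x = c • x := hT.mk_smul c x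
        rw [this]
        exact U.smul_mem c hx }
  have hprom : StrictMono prom := by
    intro a b h
    rw [SetLike.lt_iff_le_and_exists] at h ⊢
    exact ⟨fun x hx => h.1 hx, h.2⟩
  have hfr : StrictMono (fun U : Submodule (R ⧸ I) W => Module.finrank (R ⧸ I) U) := by
    intro a b h
    exact Submodule.finrank_lt_finrank_of_lt h
  have h1 : height (⊤ : Submodule R W) ≤ height (prom ⊤) :=
    height_le_height_apply_of_strictMono _ hprom ⊤
  have h2 : height (prom ⊤) ≤ height (⊤ : Submodule (R ⧸ I) W) := height_mono le_top
  have h3 : height (⊤ : Submodule (R ⧸ I) W) ≤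
      height (Module.finrank (R ⧸ I) (⊤ : Submodule (R ⧸ I) W)) :=
    height_le_height_apply_of_strictMono _ hfr ⊤
  have h4 : height (Module.finrank (R ⧸ I) (⊤ : Submodule (R ⧸ I) W)) ≠ ⊤ := by
    rw [Order.height_nat]
    exact (ENat.coe_lt_top _).ne
  intro htop
  exact h4 (top_le_iff.mp (htop ▸ (h1.trans (h2.trans h3))))

/-- In a Noetherian ring, the quotient by a power of a maximal ideal has finite
submodule-lattice height. -/
lemma height_top_quotient_pow_ne_top [IsNoetherianRing R] (I : Ideal R) [I.IsMaximal] :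
    ∀ j : ℕ, height (⊤ : Submodule R (R ⧸ (I ^ j : Ideal R))) ≠ ⊤ := by
  intro j
  induction j with
  | zero =>
    have : Subsingleton (R ⧸ (I ^ 0 : Ideal R)) := by
      rw [pow_zero, Ideal.one_eq_top]
      exact Submodule.Quotient.subsingleton_iff.mpr rfl
    have hmin : IsMin (⊤ : Submodule R (R ⧸ (I ^ 0 : Ideal R))) := by
      intro b _
      exact le_of_eq (Subsingleton.elim _ _)
    rw [Order.height_eq_zero.mpr hmin]
    simp
  | succ j ih =>
    set S : Submodule R R := (I ^ (j + 1) : Ideal R) with hS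
    set N : Submodule R (R ⧸ (I ^ (j+1) : Ideal R)) :=
      Submodule.map (I ^ (j+1) : Ideal R).mkQ (I ^ j : Ideal R) with hN
    have hle : (I ^ (j+1) : Ideal R) ≤ (I ^ j : Ideal R) := Ideal.pow_le_pow_right (by omega)
    -- the quotient (R ⧸ I^(j+1)) ⧸ N is R ⧸ I^j
    have e : ((R ⧸ (I ^ (j+1) : Ideal R)) ⧸ N) ≃ₗ[R] (R ⧸ (I ^ j : Ideal R)) :=
      Submodule.quotientQuotientEquivQuotient _ _ hle
    -- N is a f.g. torsion module
    haveI : IsNoetherian R R := inferInstance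
    haveI : Module.Finite R N := Module.Finite.iff_fg.mpr (IsNoetherian.noetherian N)
    have hT : Module.IsTorsionBySet R N (I : Set R) := by
      rintro ⟨x, hx⟩ ⟨a, ha⟩
      obtain ⟨y, hy, rfl⟩ := hx
      have hmem : a * y ∈ (I ^ (j+1) : Ideal R) := by
        rw [pow_succ, mul_comm ((I:Ideal R)^j) I]
        exact Ideal.mul_mem_mul ha hy
      apply Subtype.ext
      show a • ((I ^ (j+1) : Ideal R)).mkQ y = 0
      rw [← map_smul]
      exact (Submodule.Quotient.mk_eq_zero _).mpr (by simpa using hmem)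
    have hN' : height (⊤ : Submodule R N) ≠ ⊤ :=
      height_top_ne_top_of_torsion I N hT
    have hQ : height (⊤ : Submodule R ((R ⧸ (I ^ (j+1) : Ideal R)) ⧸ N)) ≠ ⊤ := by
      rw [height_top_congr e]
      exact ih
    have hcomb := height_top_submodule_le N
    intro htop
    rw [htop] at hcomb
    exact (WithTop.add_ne_top.mpr ⟨hN', hQ⟩) (top_le_iff.mp hcomb)

end HeightLemmas

/-- For a prime `𝒫` of a Noetherian commutative ring `A`, the sequence of lengths
`ℓ(A_𝒫 / 𝒫ⁿ A_𝒫)` is bounded if and only if `𝒫` is a minimal prime of `A`. -/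
theorem length_quotient_pow_bounded_iff_minimalPrime
    (A : Type u) [CommRing A] [IsNoetherianRing A] (P : Ideal A) [P.IsPrime] :
    (∃ C : ℕ, ∀ n : ℕ, 1 ≤ n →
      olength (Localization.AtPrime P)
        (Localization.AtPrime P ⧸
          (P.map (algebraMap A (Localization.AtPrime P))) ^ n) ≤ (C : Ordinal)) ↔
      P ∈ minimalPrimes A := by
  set R := Localization.AtPrime P with hR
  letI : IsNoetherianRing R := IsLocalization.isNoetherianRing P.primeCompl R ‹IsNoetherianRing A›
  set m : Ideal R := P.map (algebraMap A R) with hm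
  have hmmax : m.IsMaximal := by
    rw [hm, Localization.AtPrime.map_eq_maximalIdeal]
    exact IsLocalRing.maximalIdeal.isMaximal _
  constructor
  · rintro ⟨C, hC⟩
    have hstab : ∃ i, i ≤ C ∧ (m ^ (i + 1) : Ideal R) = m ^ i := by
      by_contra hcon
      push_neg at hcon
      have hstrict : ∀ i, i ≤ C → (m ^ (i + 1) : Ideal R) < m ^ i := fun i hi =>
        lt_of_le_of_ne (Ideal.pow_le_pow_right (by omega)) (hcon i hi)
      set n := C + 1 with hn
      set g : ℕ → Submodule R (R ⧸ (m ^ n : Ideal R)) :=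
        fun i => Submodule.map (m ^ n : Ideal R).mkQ (m ^ i : Ideal R) with hg
      have hgdesc : ∀ i, i < n → g (i + 1) < g i := by
        intro i hi
        refine lt_of_le_of_ne (Submodule.map_mono (Ideal.pow_le_pow_right (by omega))) ?_
        intro e
        have e2 : Submodule.comap (m ^ n : Ideal R).mkQ (g (i + 1)) =
            Submodule.comap (m ^ n : Ideal R).mkQ (g i) := by rw [e]
        simp only [hg, Submodule.comap_map_mkQ] at e2
        have hsub1 : (m ^ n : Ideal R) ≤ m ^ (i + 1) := Ideal.pow_le_pow_right (by omega)
        have hsub2 : (m ^ n : Ideal R) ≤ m ^ i := Ideal.pow_le_pow_right (by omega)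
        rw [sup_eq_right.mpr hsub1, sup_eq_right.mpr hsub2] at e2
        exact (hstrict i (by omega)).ne e2
      have hbound := nat_le_rank_of_descending g n hgdesc
      have hgn : g n = ⊥ := by
        simp only [hg]
        refine le_bot_iff.mp ?_
        rw [Submodule.map_le_iff_le_comap]
        intro x hx
        simp only [Submodule.mem_comap, Submodule.mem_bot]
        exact (Submodule.Quotient.mk_eq_zero _).mpr hx
      rw [hgn] at hbound
      have hole := hC n (by omega)
      rw [olength_eq_rank] at hole
      have hfin : (n : Ordinal) ≤ (C : Ordinal) := hbound.trans hole
      have : n ≤ C := by exact_mod_cast hfin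
      omega
    obtain ⟨i, hiC, hstabi⟩ := hstab
    have hfg : (m ^ i : Ideal R).FG := IsNoetherian.noetherian _
    have hsmul : (m ^ i : Ideal R) ≤ m • (m ^ i : Ideal R) := by
      rw [Ideal.smul_eq_mul, ← pow_succ']
      exact le_of_eq hstabi.symm
    have hjac : m ≤ Ideal.jacobson ⊥ := by
      rw [IsLocalRing.jacobson_eq_maximalIdeal ⊥ bot_ne_top, hm,
        Localization.AtPrime.map_eq_maximalIdeal]
    have hbot : (m ^ i : Ideal R) = ⊥ :=
      Submodule.eq_bot_of_le_smul_of_le_jacobson_bot m _ hfg hsmul hjac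
    refine ⟨⟨‹P.IsPrime›, bot_le⟩, ?_⟩
    intro Q hQ hQP
    haveI hQprime : Q.IsPrime := hQ.1
    have hdisj : Disjoint (P.primeCompl : Set A) (Q : Set A) := by
      rw [Set.disjoint_left]
      intro x hx hxQ
      exact hx (hQP hxQ)
    have hQ'prime : (Q.map (algebraMap A R)).IsPrime :=
      IsLocalization.isPrime_of_isPrime_disjoint P.primeCompl R Q hQprime hdisj
    have hcomap : Ideal.comap (algebraMap A R) (Q.map (algebraMap A R)) = Q :=
      IsLocalization.comap_map_of_isPrime_disjoint P.primeCompl R hQprime hdisj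
    have hmq : m ≤ Q.map (algebraMap A R) := by
      have hple : (m ^ i : Ideal R) ≤ Q.map (algebraMap A R) := by
        rw [hbot]; exact bot_le
      exact Ideal.IsPrime.le_of_pow_le hple
    calc P ≤ Ideal.comap (algebraMap A R) m := Ideal.le_comap_map
      _ ≤ Ideal.comap (algebraMap A R) (Q.map (algebraMap A R)) := Ideal.comap_mono hmq
      _ = Q := hcomap
  · intro hmin
    have hnil : m ≤ nilradical R := by
      rw [nilradical_eq_sInf]
      refine le_sInf ?_
      rintro J hJ
      haveI hJp : J.IsPrime := hJ
      have hJle : J ≤ IsLocalRing.maximalIdeal R := IsLocalRing.le_maximalIdeal hJp.ne_top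
      have hcm : Ideal.comap (algebraMap A R) J ≤ P := by
        have h := Ideal.comap_mono (f := algebraMap A R) hJle
        exact h.trans_eq (Localization.AtPrime.comap_maximalIdeal (I := P))
      haveI : (Ideal.comap (algebraMap A R) J).IsPrime := hJp.comap _
      have hPle : P ≤ Ideal.comap (algebraMap A R) J := hmin.2 ⟨inferInstance, bot_le⟩ hcm
      calc m = P.map (algebraMap A R) := hm
        _ ≤ (Ideal.comap (algebraMap A R) J).map (algebraMap A R) := Ideal.map_mono hPle
        _ = J := IsLocalization.map_comap P.primeCompl R J
    obtain ⟨k, hk⟩ := IsNoetherianRing.isNilpotent_nilradical R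
    have hmk : (m ^ k : Ideal R) = ⊥ := by
      have h1 : (m ^ k : Ideal R) ≤ (nilradical R) ^ k := Ideal.pow_right_mono hnil k
      rw [hk] at h1
      exact le_bot_iff.mp (by simpa using h1)
    have hheight : Order.height (⊤ : Submodule R R) ≠ ⊤ := by
      haveI := hmmax
      have h := height_top_quotient_pow_ne_top m k
      rwa [height_top_congr (Submodule.quotEquivOfEqBot _ hmk)] at h
    obtain ⟨C, hCeq⟩ : ∃ C : ℕ, Order.height (⊤ : Submodule R R) = (C : ℕ∞) := by
      obtain ⟨C, hC2⟩ := WithTop.ne_top_iff_exists.mp hheight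
      exact ⟨C, hC2.symm⟩
    refine ⟨C, ?_⟩
    intro n hn
    rw [olength_eq_rank]
    have hsm : StrictMono (fun x : Submodule R (R ⧸ (m ^ n : Ideal R)) =>
        Submodule.comap (m ^ n : Ideal R).mkQ x) := by
      intro a b h
      refine lt_of_le_of_ne (Submodule.comap_mono h.le) fun e => h.ne ?_
      exact Submodule.comap_injective_of_surjective (Submodule.mkQ_surjective _) e
    have hchain : ∀ p : LTSeries (Submodule R (R ⧸ (m ^ n : Ideal R))),
        p.head = ⊥ → p.length ≤ C := by
      intro p _
      have h1 : ((p.map _ hsm).length : ℕ∞) ≤ Order.height (p.map _ hsm).last :=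
        Order.length_le_height_last
      have h2 : Order.height (p.map _ hsm).last ≤ Order.height (⊤ : Submodule R R) :=
        Order.height_mono le_top
      rw [hCeq] at h2
      have h3 : (p.length : ℕ∞) ≤ (C : ℕ∞) := by
        simpa using h1.trans h2
      exact_mod_cast h3
    exact acc_rank_le_of_chains C ⊥ (IsWellFounded.apply _ ⊥) hchain
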